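/- arXiv:2507.23335 — 6 statements merged into one kernel-verified Lean document; each statement's English description precedes it below -/
import Mathlib

section
/- Let Y be a finite set, α : Y → ℕ, y₀ ∈ Y, k ∈ ℕ, n = |{y ∈ Y : α(y) ≥ α(y₀)}| with n - 1 < k, and suppose |{y ∈ Y : α(y) < α(y₀)}| ≥ k - n + 1. Define C = min over subsets S ⊆ {y : α(y) < α(y₀)} with |S| = k - n + 1 of ∑_{y∈S} (α(y₀) - α(y)). Then for every δ : Y → ℕ with δ(y₀) = 0 and ∑_{y∈Y} δ(y) < C, setting γ(y) = α(y) + δ(y), we have |{y ∈ Y : γ(y) ≥ γ(y₀)}| ≤ k. -/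
open Finset

/-- if the attacker adds no votes to `y₀` and spends strictly
less than the smallest tie cost `C`, at most `k` labels reach `γ(y₀)`. -/
theorem stmt_1 {ι : Type*} [DecidableEq ι] (Y : Finset ι) (α : ι → ℕ) (y₀ : ι)
    (hy₀ : y₀ ∈ Y) (k n : ℕ)
    (hn : n = (Y.filter (fun y => α y₀ ≤ α y)).card)
    (hk : n - 1 < k)
    (hex : k - n + 1 ≤ (Y.filter (fun y => α y < α y₀)).card)
    (C : ℕ)
    (hC : IsLeast {c | ∃ S ⊆ Y.filter (fun y => α y < α y₀),
        S.card = k - n + 1 ∧ c = ∑ y ∈ S, (α y₀ - α y)} C) :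
    ∀ δ : ι → ℕ, δ y₀ = 0 → (∑ y ∈ Y, δ y) < C →
      (Y.filter (fun y => α y₀ + δ y₀ ≤ α y + δ y)).card ≤ k := by
  intro δ hδ0 hbudget
  by_contra h
  push_neg at h
  set T := Y.filter (fun y => α y₀ + δ y₀ ≤ α y + δ y) with hT
  set B := Y.filter (fun y => α y < α y₀ ∧ α y₀ ≤ α y + δ y) with hB
  have hsub : T ⊆ (Y.filter (fun y => α y₀ ≤ α y)) ∪ B := by
    intro y hy
    simp only [hT, mem_filter, hδ0, add_zero] at hy
    simp only [mem_union, hB, mem_filter]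
    rcases le_or_gt (α y₀) (α y) with h' | h'
    · exact Or.inl ⟨hy.1, h'⟩
    · exact Or.inr ⟨hy.1, h', hy.2⟩
  have hcard : T.card ≤ n + B.card := by
    calc T.card ≤ ((Y.filter (fun y => α y₀ ≤ α y)) ∪ B).card := card_le_card hsub
    _ ≤ (Y.filter (fun y => α y₀ ≤ α y)).card + B.card := card_union_le _ _
    _ = n + B.card := by rw [hn]
  have hBcard : k - n + 1 ≤ B.card := by omega
  obtain ⟨S, hS, hScard⟩ := Finset.exists_subset_card_eq hBcard
  have hSsub : S ⊆ Y.filter (fun y => α y < α y₀) := by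
    intro y hy
    have := hS hy
    simp only [hB, mem_filter] at this ⊢
    exact ⟨this.1, this.2.1⟩
  have hCle : C ≤ ∑ y ∈ S, (α y₀ - α y) := hC.2 ⟨S, hSsub, hScard, rfl⟩
  have hle : ∑ y ∈ S, (α y₀ - α y) ≤ ∑ y ∈ S, δ y := by
    apply Finset.sum_le_sum
    intro y hy
    have := hS hy
    simp only [hB, mem_filter] at this
    omega
  have hle2 : ∑ y ∈ S, δ y ≤ ∑ y ∈ Y, δ y :=
    Finset.sum_le_sum_of_subset (hSsub.trans (filter_subset _ _))
  omega
end

section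
/- Let Y be a finite set, α : Y → ℕ, y₀ ∈ Y, k ∈ ℕ, n = |{y ∈ Y : α(y) ≥ α(y₀)}| with n - 1 < k, and suppose |{y ∈ Y : α(y) < α(y₀)}| ≥ k - n + 1. Define C as the minimum of ∑_{y∈S}(α(y₀) - α(y)) over subsets S of size k - n + 1 of labels y with α(y) < α(y₀). Then for every δ : Y → ℕ (allowing δ(y₀) > 0) with ∑_{y∈Y} δ(y) < C, setting γ = α + δ, we have |{y ∈ Y : γ(y) ≥ γ(y₀)}| ≤ k. -/
open Finset

/-- full Theorem 2 — even allowing `δ(y₀) > 0`, a total budget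
strictly less than the smallest tie cost `C` leaves at most `k` labels with
adjusted votes `≥ γ(y₀)`. -/
theorem stmt_2 {ι : Type*} [DecidableEq ι] (Y : Finset ι) (α : ι → ℕ) (y₀ : ι)
    (hy₀ : y₀ ∈ Y) (k n : ℕ)
    (hn : n = (Y.filter (fun y => α y₀ ≤ α y)).card)
    (hk : n - 1 < k)
    (hex : k - n + 1 ≤ (Y.filter (fun y => α y < α y₀)).card)
    (C : ℕ)
    (hC : IsLeast {c | ∃ S ⊆ Y.filter (fun y => α y < α y₀),
        S.card = k - n + 1 ∧ c = ∑ y ∈ S, (α y₀ - α y)} C) :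
    ∀ δ : ι → ℕ, (∑ y ∈ Y, δ y) < C →
      (Y.filter (fun y => α y₀ + δ y₀ ≤ α y + δ y)).card ≤ k := by
  intro δ hδ
  by_contra h
  push_neg at h
  set B := Y.filter (fun y => α y₀ + δ y₀ ≤ α y + δ y) with hB
  have hn1 : 1 ≤ n := by
    rw [hn]
    exact Finset.card_pos.mpr ⟨y₀, Finset.mem_filter.mpr ⟨hy₀, le_refl _⟩⟩
  have hkn : n ≤ k := by omega
  have hsum : (B.filter (fun y => α y < α y₀)).card
      + (B.filter (fun y => ¬ α y < α y₀)).card = B.card :=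
    Finset.card_filter_add_card_filter_not (fun y => α y < α y₀)
  have hsub2 : B.filter (fun y => ¬ α y < α y₀) ⊆ Y.filter (fun y => α y₀ ≤ α y) := by
    intro y hy
    simp only [hB, Finset.mem_filter] at hy ⊢
    exact ⟨hy.1.1, by omega⟩
  have hle2 : (B.filter (fun y => ¬ α y < α y₀)).card ≤ n := by
    rw [hn]; exact Finset.card_le_card hsub2
  have hcard : k - n + 1 ≤ (B.filter (fun y => α y < α y₀)).card := by omega
  obtain ⟨S, hS, hScard⟩ := Finset.exists_subset_card_eq hcard
  have hSsub : S ⊆ Y.filter (fun y => α y < α y₀) := by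
    intro y hy
    have := hS hy
    simp only [hB, Finset.mem_filter] at this ⊢
    exact ⟨this.1.1, this.2⟩
  have hCle : C ≤ ∑ y ∈ S, (α y₀ - α y) := hC.2 ⟨S, hSsub, hScard, rfl⟩
  have hδS : ∑ y ∈ S, (α y₀ - α y) ≤ ∑ y ∈ S, δ y := by
    apply Finset.sum_le_sum
    intro y hy
    have hy' := hS hy
    simp only [hB, Finset.mem_filter] at hy'
    omega
  have hSY : S ⊆ Y := fun y hy => (Finset.mem_filter.mp (hSsub hy)).1
  have : ∑ y ∈ S, δ y ≤ ∑ y ∈ Y, δ y :=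
    Finset.sum_le_sum_of_subset hSY
  omega
end

section
/- Let Y be a finite set, α : Y → ℕ, y₀ ∈ Y, k ∈ ℕ, n = |{y ∈ Y : α(y) ≥ α(y₀)}| with n - 1 < k, and suppose |{y : α(y) < α(y₀)}| ≥ k - n + 1. Define C as the smallest tie cost as above. Then there exists δ : Y → ℕ with δ(y₀) = 0 and ∑_{y∈Y} δ(y) = C such that, with γ = α + δ, |{y ∈ Y : γ(y) ≥ γ(y₀)}| ≥ k + 1. -/
open Finset

/-- tightness — an attack of cost exactly `C` pushes at least
`k+1` labels (including `y₀`) to adjusted votes `≥ γ(y₀)`. -/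
theorem stmt_3 {ι : Type*} [DecidableEq ι] (Y : Finset ι) (α : ι → ℕ) (y₀ : ι)
    (hy₀ : y₀ ∈ Y) (k n : ℕ)
    (hn : n = (Y.filter (fun y => α y₀ ≤ α y)).card)
    (hk : n - 1 < k)
    (hex : k - n + 1 ≤ (Y.filter (fun y => α y < α y₀)).card)
    (C : ℕ)
    (hC : IsLeast {c | ∃ S ⊆ Y.filter (fun y => α y < α y₀),
        S.card = k - n + 1 ∧ c = ∑ y ∈ S, (α y₀ - α y)} C) :
    ∃ δ : ι → ℕ, δ y₀ = 0 ∧ (∑ y ∈ Y, δ y) = C ∧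
      k + 1 ≤ (Y.filter (fun y => α y₀ + δ y₀ ≤ α y + δ y)).card := by
  obtain ⟨⟨S, hS, hScard, hCsum⟩, _⟩ := hC
  refine ⟨fun y => if y ∈ S then α y₀ - α y else 0, ?_, ?_, ?_⟩
  · have : y₀ ∉ S := fun h => by
      have := hS h; simp only [Finset.mem_filter] at this; omega
    simp [this]
  · rw [← Finset.sum_subset (fun y hy => Finset.mem_of_mem_filter y (hS hy))
      (fun y _ hy => by simp [hy])]
    rw [hCsum]
    exact Finset.sum_congr rfl (fun y hy => by simp [hy])
  · beta_reduce
    have hy0S : y₀ ∉ S := fun h => by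
      have := hS h; simp only [Finset.mem_filter] at this; omega
    have hsub : S ∪ Y.filter (fun y => α y₀ ≤ α y) ⊆
        Y.filter (fun y => α y₀ + (if y₀ ∈ S then α y₀ - α y₀ else 0) ≤
          α y + (if y ∈ S then α y₀ - α y else 0)) := by
      intro y hy
      simp only [Finset.mem_union] at hy
      rcases hy with hy | hy
      · have h1 := hS hy
        simp only [Finset.mem_filter] at h1 ⊢
        refine ⟨h1.1, ?_⟩
        simp [hy, hy0S]; omega
      · simp only [Finset.mem_filter] at hy ⊢
        refine ⟨hy.1, ?_⟩
        simp [hy0S]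
        split <;> omega
    have hdisj : Disjoint S (Y.filter (fun y => α y₀ ≤ α y)) := by
      rw [Finset.disjoint_left]
      intro y hy hy'
      have := hS hy
      simp at this hy'; omega
    have hcard := Finset.card_le_card hsub
    rw [Finset.card_union_of_disjoint hdisj, hScard, ← hn] at hcard
    have hn1 : 1 ≤ n := by
      rw [hn]
      exact Finset.card_pos.mpr ⟨y₀, Finset.mem_filter.mpr ⟨hy₀, le_refl _⟩⟩
    omega
end

section
/- Let Y be a finite set, α : Y → ℕ, y₀ ∈ Y, k ∈ ℕ, Δ ∈ ℕ, with n = |{y : α(y) ≥ α(y₀)}|, n - 1 < k, and |{y : α(y) < α(y₀)}| ≥ k - n + 1. Suppose for every y ≠ y₀ with α(y) + Δ ≥ α(y₀) — i.e., α(y₀) - α(y) ≤ Δ — the number of such labels is m < k. Then the smallest tie cost C_k = min over size-(k-n+1) subsets S ⊆ {y : α(y) < α(y₀)} of ∑_{y∈S}(α(y₀) - α(y)) satisfies C_k > Δ. -/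
open Finset

/-- direction ① of Property 1 — the pairwise-bound condition of
PatchGuard/CBN implies CostCert's condition `C_k > Δ`. -/
theorem stmt_8 {ι : Type*} [DecidableEq ι] (Y : Finset ι) (α : ι → ℕ) (y₀ : ι)
    (hy₀ : y₀ ∈ Y) (k Δ n : ℕ)
    (hn : n = (Y.filter (fun y => α y₀ ≤ α y)).card)
    (hk : n - 1 < k)
    (hex : k - n + 1 ≤ (Y.filter (fun y => α y < α y₀)).card)
    (hm : (Y.filter (fun y => y ≠ y₀ ∧ α y₀ ≤ α y + Δ)).card < k)
    (C : ℕ)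
    (hC : IsLeast {c | ∃ S ⊆ Y.filter (fun y => α y < α y₀),
        S.card = k - n + 1 ∧ c = ∑ y ∈ S, (α y₀ - α y)} C) :
    Δ < C := by
  obtain ⟨⟨S, hSsub, hScard, hCsum⟩, -⟩ := hC
  subst hCsum
  by_contra h
  push_neg at h
  have hall : ∀ y ∈ S, α y₀ ≤ α y + Δ := by
    intro y hy
    have := Finset.single_le_sum (f := fun y => α y₀ - α y)
      (fun _ _ => Nat.zero_le _) hy
    omega
  have hn1 : 1 ≤ n := by
    rw [hn]
    exact Finset.card_pos.mpr ⟨y₀, Finset.mem_filter.mpr ⟨hy₀, le_refl _⟩⟩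
  set N := (Y.filter (fun y => α y₀ ≤ α y)).erase y₀ with hN
  have hNcard : N.card = n - 1 := by
    rw [hN, hn]
    exact Finset.card_erase_of_mem (Finset.mem_filter.mpr ⟨hy₀, le_refl _⟩)
  have hdisj : Disjoint S N := by
    rw [Finset.disjoint_left]
    intro a haS haN
    have h1 := (Finset.mem_filter.mp (hSsub haS)).2
    have h2 := (Finset.mem_filter.mp (Finset.mem_of_mem_erase haN)).2
    omega
  have hsub : S ∪ N ⊆ Y.filter (fun y => y ≠ y₀ ∧ α y₀ ≤ α y + Δ) := by
    intro a ha
    rcases Finset.mem_union.mp ha with ha | ha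
    · have h1 := Finset.mem_filter.mp (hSsub ha)
      refine Finset.mem_filter.mpr ⟨h1.1, ?_, hall a ha⟩
      intro heq
      subst heq
      omega
    · have h1 := Finset.mem_filter.mp (Finset.mem_of_mem_erase ha)
      exact Finset.mem_filter.mpr ⟨h1.1, Finset.ne_of_mem_erase ha, by omega⟩
  have hle := Finset.card_le_card hsub
  rw [Finset.card_union_of_disjoint hdisj, hScard, hNcard] at hle
  omega
end

section
/- Let Y be a finite set, α : Y → ℕ, y₀ ∈ Y, k, Δ ∈ ℕ, with n = |{y : α(y) ≥ α(y₀)}|, n - 1 < k, and |{y : α(y) < α(y₀)}| ≥ k - n + 1, and let C_k be the smallest tie cost. If C_k > Δ, then for every β : Y → ℕ with ∑_{y∈Y} β(y) ≤ Δ, setting v = α + β, we have |{y ∈ Y : v(y) ≥ v(y₀)}| ≤ k; in particular, in any ranking of Y by v (descending, resolving ties arbitrarily but never in favor of y₀), y₀ occupies one of the first k positions. -/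
open Finset

/-- abstract core of Theorem 3 — if the smallest tie cost
exceeds the budget `Δ`, then for any dirty votes `β` totalling at most `Δ`,
the true label `y₀` stays within the top `k`. -/
theorem stmt_14 {ι : Type*} [DecidableEq ι] (Y : Finset ι) (α : ι → ℕ)
    (y₀ : ι) (hy₀ : y₀ ∈ Y) (k Δ n : ℕ)
    (hn : n = (Y.filter (fun y => α y₀ ≤ α y)).card)
    (hk : n - 1 < k)
    (hex : k - n + 1 ≤ (Y.filter (fun y => α y < α y₀)).card)
    (C : ℕ)
    (hC : IsLeast {c | ∃ S ⊆ Y.filter (fun y => α y < α y₀),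
        S.card = k - n + 1 ∧ c = ∑ y ∈ S, (α y₀ - α y)} C)
    (hCΔ : Δ < C) :
    ∀ β : ι → ℕ, (∑ y ∈ Y, β y) ≤ Δ →
      (Y.filter (fun y => α y₀ + β y₀ ≤ α y + β y)).card ≤ k := by
  intro β hβ
  by_contra h
  push_neg at h
  set F := Y.filter (fun y => α y₀ + β y₀ ≤ α y + β y) with hF
  have hFsub : F ⊆ Y := filter_subset _ _
  have h1 : (F.filter (fun y => α y₀ ≤ α y)).card ≤ n := by
    rw [hn]
    exact card_le_card (filter_subset_filter _ hFsub)
  have hsplit := card_filter_add_card_filter_not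
    (s := F) (p := fun y => α y₀ ≤ α y)
  have h2 : k - n + 1 ≤ (F.filter (fun y => ¬ α y₀ ≤ α y)).card := by omega
  obtain ⟨S, hS, hScard⟩ := exists_subset_card_eq h2
  have hSB : S ⊆ Y.filter (fun y => α y < α y₀) := by
    intro y hy
    have := hS hy
    simp only [mem_filter, not_le] at this ⊢
    exact ⟨hFsub this.1, this.2⟩
  have hCle : C ≤ ∑ y ∈ S, (α y₀ - α y) := hC.2 ⟨S, hSB, hScard, rfl⟩
  have hsum : ∑ y ∈ S, (α y₀ - α y) ≤ ∑ y ∈ S, β y := by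
    apply Finset.sum_le_sum
    intro y hy
    have hyF : y ∈ F := mem_of_mem_filter y (hS hy)
    have : α y₀ + β y₀ ≤ α y + β y := (mem_filter.mp hyF).2
    omega
  have hsum2 : ∑ y ∈ S, β y ≤ ∑ y ∈ Y, β y :=
    Finset.sum_le_sum_of_subset (fun y hy => hFsub (mem_of_mem_filter y (hS hy)))
  omega
end

section
/- Let Y be a finite set, α : Y → ℕ, y₀ ∈ Y, k ∈ ℕ, n = |{y : α(y) ≥ α(y₀)}| with n - 1 < k, and |{y : α(y) < α(y₀)}| ≥ k - n + 1. Let C_k be the smallest tie cost and Δ ∈ ℕ. Then C_k > Δ if and only if for every δ : Y → ℕ with ∑ δ ≤ Δ, setting γ = α + δ, we have |{y ∈ Y : γ(y) ≥ γ(y₀)}| ≤ k. -/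
open Finset

/-- exact characterization — `C > Δ` iff no budget-`Δ`
allocation of additional votes can produce more than `k` labels with
adjusted votes at least `γ(y₀)`. -/
theorem stmt_16 {ι : Type*} [DecidableEq ι] (Y : Finset ι) (α : ι → ℕ)
    (y₀ : ι) (hy₀ : y₀ ∈ Y) (k Δ n : ℕ)
    (hn : n = (Y.filter (fun y => α y₀ ≤ α y)).card)
    (hk : n - 1 < k)
    (hex : k - n + 1 ≤ (Y.filter (fun y => α y < α y₀)).card)
    (C : ℕ)
    (hC : IsLeast {c | ∃ S ⊆ Y.filter (fun y => α y < α y₀),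
        S.card = k - n + 1 ∧ c = ∑ y ∈ S, (α y₀ - α y)} C) :
    Δ < C ↔ ∀ δ : ι → ℕ, (∑ y ∈ Y, δ y) ≤ Δ →
      (Y.filter (fun y => α y₀ + δ y₀ ≤ α y + δ y)).card ≤ k := by
  have hnk : n ≤ k := by omega
  constructor
  · intro hΔ δ hδ
    by_contra hcount
    push_neg at hcount
    set T := Y.filter (fun y => α y₀ + δ y₀ ≤ α y + δ y) with hT
    have hTsub : T.filter (fun y => ¬ α y < α y₀) ⊆ Y.filter (fun y => α y₀ ≤ α y) := by
      intro y hy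
      simp only [hT, Finset.mem_filter] at hy ⊢
      exact ⟨hy.1.1, by omega⟩
    have hcard : k - n + 1 ≤ (T.filter (fun y => α y < α y₀)).card := by
      have h1 := Finset.card_filter_add_card_filter_not
        (s := T) (p := fun y => α y < α y₀)
      have h2 : (T.filter (fun y => ¬ α y < α y₀)).card ≤ n := by
        rw [hn]; exact Finset.card_le_card hTsub
      omega
    obtain ⟨S, hSsub, hScard⟩ := Finset.exists_subset_card_eq hcard
    have hSlow : S ⊆ Y.filter (fun y => α y < α y₀) := by
      intro y hy
      have h := hSsub hy
      simp only [hT, Finset.mem_filter] at h ⊢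
      exact ⟨h.1.1, h.2⟩
    have hCle : C ≤ ∑ y ∈ S, (α y₀ - α y) := hC.2 ⟨S, hSlow, hScard, rfl⟩
    have hsum : ∑ y ∈ S, (α y₀ - α y) ≤ ∑ y ∈ S, δ y := by
      apply Finset.sum_le_sum
      intro y hy
      have h := hSsub hy
      simp only [hT, Finset.mem_filter] at h
      omega
    have hle : ∑ y ∈ S, δ y ≤ ∑ y ∈ Y, δ y :=
      Finset.sum_le_sum_of_subset (hSlow.trans (Finset.filter_subset _ _))
    omega
  · intro h
    by_contra hΔ
    push_neg at hΔ
    obtain ⟨S, hSsub, hScard, hCsum⟩ := hC.1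
    set δ : ι → ℕ := fun y => if y ∈ S then α y₀ - α y else 0 with hδdef
    have hy₀S : y₀ ∉ S := by
      intro h'
      have := hSsub h'
      simp only [Finset.mem_filter] at this
      omega
    have hδ0 : δ y₀ = 0 := by simp [hδdef, hy₀S]
    have hsum : ∑ y ∈ Y, δ y = C := by
      rw [hCsum, ← Finset.sum_subset (hSsub.trans (Finset.filter_subset _ _))
        (fun y _ hy => by simp [hδdef, hy])]
      exact Finset.sum_congr rfl (fun y hy => by simp [hδdef, hy])
    have hcount := h δ (by omega)
    have hsubset : Y.filter (fun y => α y₀ ≤ α y) ∪ S ⊆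
        Y.filter (fun y => α y₀ + δ y₀ ≤ α y + δ y) := by
      intro y hy
      rw [Finset.mem_union] at hy
      simp only [Finset.mem_filter] at hy ⊢
      rcases hy with ⟨hyY, hle⟩ | hyS
      · exact ⟨hyY, by omega⟩
      · have hmem := hSsub hyS
        simp only [Finset.mem_filter] at hmem
        refine ⟨hmem.1, ?_⟩
        rw [hδ0]
        simp only [hδdef, if_pos hyS]
        omega
    have hdisj : Disjoint (Y.filter (fun y => α y₀ ≤ α y)) S := by
      rw [Finset.disjoint_left]
      intro y hy hyS
      have h2 := hSsub hyS
      simp only [Finset.mem_filter] at h2 hy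
      omega
    have hfinal := Finset.card_le_card hsubset
    rw [Finset.card_union_of_disjoint hdisj, ← hn, hScard] at hfinal
    omega
end
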